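/- For a finite-dimensional complex vector space V, d ≥ 1, and φ ∈ Sym^d V, let A(φ) := {ℓ ∈ V* : ℓ ∘ φ = 0} and M(φ) := A(φ)^⊥ ⊆ V. Then φ ∈ Sym^d M(φ). -/

import Mathlib

open MvPolynomial

/-- The contraction action `ℓ ∘ φ = Σ_i ℓ_i ∂φ/∂X_i` of a linear form `ℓ ∈ V*` on `Sym V`. -/
noncomputable def contractL (n : ℕ) (ℓ : Fin (n + 1) → ℂ) :
    MvPolynomial (Fin (n + 1)) ℂ →ₗ[ℂ] MvPolynomial (Fin (n + 1)) ℂ :=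
  ∑ i, ℓ i • (pderiv i).toLinearMap

/-- Membership in `Sym^d W` for a subspace `W ⊆ V` of linear forms. -/
def symPowMem (n d : ℕ) (W : Submodule ℂ (MvPolynomial (Fin (n + 1)) ℂ))
    (φ : MvPolynomial (Fin (n + 1)) ℂ) : Prop :=
  φ ∈ Algebra.adjoin ℂ (W : Set (MvPolynomial (Fin (n + 1)) ℂ)) ∧ φ.IsHomogeneous d

/-- `A(φ) = {ℓ ∈ V* : ℓ ∘ φ = 0}`. -/
def Aphi (n : ℕ) (φ : MvPolynomial (Fin (n + 1)) ℂ) : Set (Fin (n + 1) → ℂ) :=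
  {ℓ | contractL n ℓ φ = 0}

/-- `M(φ) = A(φ)^⊥ ⊆ V`: the subspace of linear forms annihilated (under contraction) by
every element of `A(φ)`. -/
noncomputable def Mphi (n : ℕ) (φ : MvPolynomial (Fin (n + 1)) ℂ) :
    Submodule ℂ (MvPolynomial (Fin (n + 1)) ℂ) :=
  homogeneousSubmodule (Fin (n + 1)) ℂ 1 ⊓
    ⨅ ℓ ∈ Aphi n φ, LinearMap.ker (contractL n ℓ)

/- ### Auxiliary lemmas -/

lemma contract_apply (n : ℕ) (ℓ : Fin (n + 1) → ℂ) (ψ : MvPolynomial (Fin (n + 1)) ℂ) :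
    contractL n ℓ ψ = ∑ i, ℓ i • pderiv i ψ := by
  simp [contractL]

lemma pderiv_comm' {σ : Type*} [DecidableEq σ] (i j : σ) (p : MvPolynomial σ ℂ) :
    pderiv i (pderiv j p) = pderiv j (pderiv i p) := by
  induction p using MvPolynomial.induction_on' with
  | monomial s a =>
    rcases eq_or_ne i j with rfl | hij
    · rfl
    · simp only [pderiv_monomial, Finsupp.tsub_apply, Finsupp.single_apply,
        if_neg hij, if_neg (Ne.symm hij), Nat.sub_zero]
      rw [tsub_right_comm]
      ring_nf
  | add p q hp hq => simp [hp, hq]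

lemma degree_univ_sum {m : ℕ} (s : Fin m →₀ ℕ) : s.degree = ∑ i, s i :=
  Finset.sum_subset (Finset.subset_univ _)
    (fun i _ h => Finsupp.notMem_support_iff.mp h)

lemma X_mul_pderiv_monomial {n : ℕ} (i : Fin (n + 1)) (s : Fin (n + 1) →₀ ℕ) (a : ℂ) :
    X i * pderiv i (monomial s a) = monomial s (a * s i) := by
  classical
  rw [pderiv_monomial, X, monomial_mul, one_mul]
  rcases Nat.eq_zero_or_pos (s i) with h | h
  · simp [h]
  · congr 1
    rw [add_tsub_cancel_of_le]
    exact (Finsupp.single_le_iff).mpr h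

lemma euler_identity {n d : ℕ} {φ : MvPolynomial (Fin (n + 1)) ℂ}
    (hφ : φ.IsHomogeneous d) :
    ∑ i, X i * pderiv i φ = (d : ℂ) • φ := by
  classical
  have step : ∀ s ∈ φ.support, ∑ i, X i * pderiv i (monomial s (coeff s φ))
      = (d : ℂ) • monomial s (coeff s φ) := by
    intro s hs
    have hdeg : s.degree = d := by
      by_contra h
      exact (mem_support_iff.mp hs) (hφ.coeff_eq_zero h)
    calc ∑ i, X i * pderiv i (monomial s (coeff s φ))
        = ∑ i, monomial s (coeff s φ * (s i : ℂ)) :=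
          Finset.sum_congr rfl fun i _ => X_mul_pderiv_monomial i s _
      _ = monomial s (coeff s φ * ((∑ i, s i : ℕ) : ℂ)) := by
          rw [← map_sum, ← Finset.mul_sum, Nat.cast_sum]
      _ = (d : ℂ) • monomial s (coeff s φ) := by
          rw [← degree_univ_sum, hdeg, smul_monomial, smul_eq_mul, mul_comm]
  calc ∑ i, X i * pderiv i φ
      = ∑ i, ∑ s ∈ φ.support, X i * pderiv i (monomial s (coeff s φ)) := by
        conv_lhs => rw [φ.as_sum]
        refine Finset.sum_congr rfl fun i _ => ?_
        rw [map_sum, Finset.mul_sum]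
    _ = ∑ s ∈ φ.support, ∑ i, X i * pderiv i (monomial s (coeff s φ)) :=
        Finset.sum_comm
    _ = ∑ s ∈ φ.support, (d : ℂ) • monomial s (coeff s φ) :=
        Finset.sum_congr rfl step
    _ = (d : ℂ) • φ := by
        conv_rhs => rw [φ.as_sum]
        rw [Finset.smul_sum]

lemma pderiv_isHomogeneous {n d : ℕ} {φ : MvPolynomial (Fin (n + 1)) ℂ}
    (hφ : φ.IsHomogeneous (d + 1)) (i : Fin (n + 1)) :
    (pderiv i φ).IsHomogeneous d := by
  classical
  rw [← mem_homogeneousSubmodule]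
  rw [φ.as_sum, map_sum]
  refine Submodule.sum_mem _ fun s hs => ?_
  rw [pderiv_monomial]
  rcases Nat.eq_zero_or_pos (s i) with h | h
  · simp [h]
  · have hdeg : s.degree = d + 1 := by
      by_contra h'
      exact (mem_support_iff.mp hs) (hφ.coeff_eq_zero h')
    rw [mem_homogeneousSubmodule]
    refine isHomogeneous_monomial _ ?_
    rw [degree_univ_sum] at hdeg
    rw [← Finset.add_sum_erase _ s (Finset.mem_univ i)] at hdeg
    have key : (s - Finsupp.single i 1).degree
        = (s i - 1) + ∑ k ∈ Finset.univ.erase i, s k := by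
      rw [degree_univ_sum, ← Finset.add_sum_erase _ _ (Finset.mem_univ i)]
      congr 1
      · rw [Finsupp.tsub_apply, Finsupp.single_eq_same]
      · refine Finset.sum_congr rfl fun k hk => ?_
        rw [Finsupp.tsub_apply, Finsupp.single_apply,
          if_neg (Finset.ne_of_mem_erase hk).symm, Nat.sub_zero]
    rw [key]
    omega

lemma aphi_subset_pderiv {n : ℕ} (φ : MvPolynomial (Fin (n + 1)) ℂ) (j : Fin (n + 1)) :
    Aphi n φ ⊆ Aphi n (pderiv j φ) := by
  intro ℓ hℓ
  simp only [Aphi, Set.mem_setOf_eq, contract_apply] at hℓ ⊢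
  calc ∑ i, ℓ i • pderiv i (pderiv j φ)
      = pderiv j (∑ i, ℓ i • pderiv i φ) := by
        rw [map_sum]
        exact Finset.sum_congr rfl fun i _ => by
          rw [Derivation.map_smul, pderiv_comm']
    _ = 0 := by rw [hℓ, map_zero]

lemma mphi_pderiv_le {n : ℕ} (φ : MvPolynomial (Fin (n + 1)) ℂ) (j : Fin (n + 1)) :
    Mphi n (pderiv j φ) ≤ Mphi n φ := by
  refine inf_le_inf_left _ ?_
  refine le_iInf fun ℓ => le_iInf fun hℓ => ?_
  exact iInf₂_le ℓ (aphi_subset_pderiv φ j hℓ)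

lemma key (n : ℕ) (d : ℕ) (φ : MvPolynomial (Fin (n + 1)) ℂ) (hφ : φ.IsHomogeneous d) :
    φ ∈ Algebra.adjoin ℂ ((Mphi n φ : Set (MvPolynomial (Fin (n + 1)) ℂ))) := by
  induction d generalizing φ with
  | zero =>
    have : φ = C (coeff 0 φ) := by
      rw [← homogeneousComponent_zero φ,
        homogeneousComponent_of_mem ((mem_homogeneousSubmodule _ _).mpr hφ), if_pos rfl]
    rw [this, ← MvPolynomial.algebraMap_eq]
    exact Subalgebra.algebraMap_mem _ _
  | succ d ih =>
    classical
    set B : (Fin (n + 1) → ℂ) →ₗ[ℂ] MvPolynomial (Fin (n + 1)) ℂ :=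
      ∑ i, (LinearMap.proj i : (Fin (n + 1) → ℂ) →ₗ[ℂ] ℂ).smulRight (pderiv i φ) with hB
    have hBapply : ∀ ℓ, B ℓ = ∑ i, ℓ i • pderiv i φ := by
      intro ℓ
      simp [hB]
    have hBker : ∀ ℓ, ℓ ∈ Aphi n φ ↔ ℓ ∈ LinearMap.ker B := by
      intro ℓ
      rw [Aphi, Set.mem_setOf_eq, LinearMap.mem_ker, hBapply, contract_apply]
    obtain ⟨U, hU⟩ := Submodule.exists_isCompl (LinearMap.ker B)
    choose aa uu hadd using fun i =>
      Submodule.existsUnique_add_of_isCompl hU (Pi.single i 1)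
    have hadd' : ∀ i, (↑(aa i) + ↑(uu i) : Fin (n + 1) → ℂ) = Pi.single i 1 := fun i => (hadd i).1
    set L : Fin (n + 1) → MvPolynomial (Fin (n + 1)) ℂ :=
      fun j => ∑ i, (uu i : Fin (n + 1) → ℂ) j • X i with hL
    -- each L j lies in M(φ)
    have hLM : ∀ j, L j ∈ Mphi n φ := by
      intro j
      refine Submodule.mem_inf.mpr ⟨?_, ?_⟩
      · exact Submodule.sum_mem _ fun i _ => Submodule.smul_mem _ _
          ((mem_homogeneousSubmodule _ _).mpr (isHomogeneous_X _ i))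
      · rw [Submodule.mem_iInf]
        intro ℓ
        rw [Submodule.mem_iInf]
        intro hℓ
        rw [LinearMap.mem_ker, contract_apply]
        have hpd : ∀ k, pderiv k (L j) = C ((uu k : Fin (n + 1) → ℂ) j) := by
          intro k
          rw [hL, map_sum]
          rw [Finset.sum_eq_single k]
          · rw [Derivation.map_smul, pderiv_X_self, smul_eq_C_mul, mul_one]
          · intro b _ hb
            rw [Derivation.map_smul, pderiv_X_of_ne hb, smul_zero]
          · intro h
            exact absurd (Finset.mem_univ k) h
        have hw : (∑ k, ℓ k • (uu k : Fin (n + 1) → ℂ)) = 0 := by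
          set w := ∑ k, ℓ k • (uu k : Fin (n + 1) → ℂ) with hwdef
          have hwU : w ∈ U := Submodule.sum_mem _ fun k _ =>
            Submodule.smul_mem _ _ (uu k).2
          have hwker : w ∈ LinearMap.ker B := by
            have hsingle : ∑ k, ℓ k • (Pi.single k 1 : Fin (n + 1) → ℂ) = ℓ := by
              ext x
              simp [Pi.single_apply]
            have hw2 : w + ∑ k, ℓ k • (aa k : Fin (n + 1) → ℂ) = ℓ := by
              calc w + ∑ k, ℓ k • (aa k : Fin (n + 1) → ℂ)
                  = ∑ k, ℓ k • (Pi.single k 1 : Fin (n + 1) → ℂ) := by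
                    rw [hwdef, ← Finset.sum_add_distrib]
                    exact Finset.sum_congr rfl fun k _ => by
                      rw [← smul_add, add_comm ((uu k : Fin (n + 1) → ℂ)), hadd' k]
                _ = ℓ := hsingle
            have hw3 : w = ℓ - ∑ k, ℓ k • (aa k : Fin (n + 1) → ℂ) :=
              eq_sub_of_add_eq hw2
            rw [hw3]
            refine Submodule.sub_mem _ ((hBker ℓ).mp hℓ) ?_
            exact Submodule.sum_mem _ fun k _ => Submodule.smul_mem _ _ (aa k).2
          exact (Submodule.disjoint_def.mp hU.disjoint) w hwker hwU
        calc ∑ k, ℓ k • pderiv k (L j)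
            = ∑ k, C (ℓ k * (uu k : Fin (n + 1) → ℂ) j) := by
              refine Finset.sum_congr rfl fun k _ => ?_
              rw [hpd k, smul_eq_C_mul, ← C_mul]
          _ = C (∑ k, ℓ k * (uu k : Fin (n + 1) → ℂ) j) := by rw [map_sum]
          _ = 0 := by
              have : (∑ k, ℓ k • (uu k : Fin (n + 1) → ℂ)) j = 0 := by rw [hw]; rfl
              simp only [Finset.sum_apply, Pi.smul_apply, smul_eq_mul] at this
              rw [this, map_zero]
    -- the Euler-type identity
    have hBu : ∀ i, B (uu i) = pderiv i φ := by
      intro i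
      have h1 : B (Pi.single i 1) = pderiv i φ := by
        rw [hBapply]
        rw [Finset.sum_eq_single i]
        · simp
        · intro b _ hb
          simp [Pi.single_apply, if_neg hb]
        · intro h
          exact absurd (Finset.mem_univ i) h
      have h2 : B (aa i) = 0 := (aa i).2
      have := congrArg B (hadd' i)
      rw [map_add, h2, zero_add] at this
      rw [this, h1]
    have hmain : ∑ j, L j * pderiv j φ = ((d + 1 : ℕ) : ℂ) • φ := by
      calc ∑ j, L j * pderiv j φ
          = ∑ j, ∑ i, (uu i : Fin (n + 1) → ℂ) j • (X i * pderiv j φ) := by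
            refine Finset.sum_congr rfl fun j _ => ?_
            rw [hL, Finset.sum_mul]
            exact Finset.sum_congr rfl fun i _ => smul_mul_assoc _ _ _
        _ = ∑ i, ∑ j, (uu i : Fin (n + 1) → ℂ) j • (X i * pderiv j φ) := Finset.sum_comm
        _ = ∑ i, X i * B (uu i) := by
            refine Finset.sum_congr rfl fun i _ => ?_
            rw [hBapply, Finset.mul_sum]
            exact Finset.sum_congr rfl fun j _ => (mul_smul_comm _ _ _).symm
        _ = ∑ i, X i * pderiv i φ := by
            exact Finset.sum_congr rfl fun i _ => by rw [hBu i]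
        _ = ((d + 1 : ℕ) : ℂ) • φ := euler_identity hφ
    have hne : ((d + 1 : ℕ) : ℂ) ≠ 0 := by
      exact_mod_cast Nat.succ_ne_zero d
    have hrep : φ = ((d + 1 : ℕ) : ℂ)⁻¹ • ∑ j, L j * pderiv j φ := by
      rw [hmain, smul_smul, inv_mul_cancel₀ hne, one_smul]
    have hmem : ((d + 1 : ℕ) : ℂ)⁻¹ • ∑ j, L j * pderiv j φ
        ∈ Algebra.adjoin ℂ ((Mphi n φ : Set (MvPolynomial (Fin (n + 1)) ℂ))) := by
      refine Subalgebra.smul_mem _ (Subalgebra.sum_mem _ fun j _ => Subalgebra.mul_mem _ ?_ ?_) _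
      · exact Algebra.subset_adjoin (show L j ∈ (Mphi n φ : Set _) from hLM j)
      · exact Algebra.adjoin_mono (SetLike.coe_subset_coe.mpr (mphi_pderiv_le φ j))
          (ih _ (pderiv_isHomogeneous hφ j))
    rw [← hrep] at hmem
    exact hmem

/-- `φ ∈ Sym^d M(φ)`. -/
theorem stmt1 (n d : ℕ) (hd : 1 ≤ d) (φ : MvPolynomial (Fin (n + 1)) ℂ)
    (hφ : φ.IsHomogeneous d) :
    symPowMem n d (Mphi n φ) φ :=
  ⟨key n d φ hφ, hφ⟩
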